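/- Fix k, ν ∈ N with ν ≤ k and n ≥ 1, and let P_{k−ν} be an R_{0,m}-valued polynomial on R^m, homogeneous of degree k−ν, with ∂_x P_{k−ν} = 0 on R^m. With β_{k−ν}(s) = s for s even and β_{k−ν}(s) = 2(k−ν) + m + s − 1 for s odd, one has (1/2) ∂̄_x CK[ x^{ν+n} P_{k−ν}(x) ](x_0, x) = β_{k−ν}(ν+n) · CK[ x^{ν+n−1} P_{k−ν}(x) ](x_0, x) for all (x_0, x) ∈ R^{m+1}. -/

import Mathlib

noncomputable section

/-- The negative definite quadratic form `Q(v) = -‖v‖²` on `ℝ^m`. -/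
def Qf (m : ℕ) : QuadraticForm ℝ (Fin m → ℝ) :=
  QuadraticMap.weightedSumSquares ℝ (fun _ : Fin m => (-1 : ℝ))

/-- The real Clifford algebra `R_{0,m}`. -/
abbrev Cl (m : ℕ) := CliffordAlgebra (Qf m)

/-- The generators `e j` of `R_{0,m}`. -/
def e (m : ℕ) (j : Fin m) : Cl m := CliffordAlgebra.ι (Qf m) (Pi.single j 1)

/-- The vector `x ∈ ℝ^m` viewed as an element `Σ_j x_j e_j` of the Clifford algebra. -/
def clVec (m : ℕ) (x : Fin m → ℝ) : Cl m := CliffordAlgebra.ι (Qf m) x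

namespace Cl

variable {m : ℕ}

lemma Qf_single (m : ℕ) (i : Fin m) : Qf m (Pi.single i 1) = -1 := by
  simp [Qf, QuadraticMap.weightedSumSquares_apply, Pi.single_apply]

lemma e_sq (m : ℕ) (i : Fin m) : e m i * e m i = algebraMap ℝ _ (-1) := by
  rw [e, CliffordAlgebra.ι_sq_scalar, Qf_single]

lemma polar_single (m : ℕ) {i j : Fin m} (h : i ≠ j) :
    QuadraticMap.polar (Qf m) (Pi.single i 1) (Pi.single j 1) = 0 := by
  classical
  simp only [QuadraticMap.polar, Qf, QuadraticMap.weightedSumSquares_apply, smul_eq_mul]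
  rw [← Finset.sum_sub_distrib, ← Finset.sum_sub_distrib]
  apply Finset.sum_eq_zero
  intro k _
  rcases eq_or_ne k i with rfl | hki <;> rcases eq_or_ne k j with rfl | hkj <;>
    simp_all [Pi.single_apply]

lemma e_anticomm (m : ℕ) {i j : Fin m} (h : i ≠ j) :
    e m i * e m j = - (e m j * e m i) := by
  have := CliffordAlgebra.ι_mul_ι_add_swap (Q := Qf m) (Pi.single i 1) (Pi.single j 1)
  rw [polar_single m h] at this
  simp only [map_zero] at this
  rw [eq_neg_iff_add_eq_zero]
  exact this

/-- Ordered products of generators. -/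
def lprod (m : ℕ) (l : List (Fin m)) : Cl m := (l.map (e m)).prod

lemma lprod_nil : lprod m [] = 1 := rfl

lemma lprod_cons (i : Fin m) (l : List (Fin m)) :
    lprod m (i :: l) = e m i * lprod m l := by
  simp [lprod]

lemma lprod_append (l₁ l₂ : List (Fin m)) :
    lprod m (l₁ ++ l₂) = lprod m l₁ * lprod m l₂ := by
  simp [lprod]

lemma straighten (m : ℕ) : ∀ (l : List (Fin m)), l.Pairwise (· < ·) → ∀ i : Fin m,
    ∃ (c : ℝ) (l' : List (Fin m)), l'.Pairwise (· < ·) ∧ (∀ x ∈ l', x = i ∨ x ∈ l) ∧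
      e m i * lprod m l = c • lprod m l'
  | [], _, i => ⟨1, [i], by simp, by simp, by simp [lprod]⟩
  | j :: t, hs, i => by
    have ht : t.Pairwise (· < ·) := (List.pairwise_cons.mp hs).2
    have hjt : ∀ x ∈ t, j < x := (List.pairwise_cons.mp hs).1
    rcases lt_trichotomy i j with hij | rfl | hij
    · refine ⟨1, i :: j :: t, ?_, ?_, by simp [lprod_cons]⟩
      · exact List.pairwise_cons.mpr ⟨by
          intro x hx
          rcases List.mem_cons.mp hx with rfl | hx'
          · exact hij
          · exact hij.trans (hjt x hx'), hs⟩
      · intro x hx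
        rcases List.mem_cons.mp hx with rfl | hx'
        · exact Or.inl rfl
        · exact Or.inr hx'
    · refine ⟨-1, t, ht, fun x hx => Or.inr (List.mem_cons_of_mem _ hx), ?_⟩
      rw [lprod_cons, ← mul_assoc, e_sq]
      rw [Algebra.algebraMap_eq_smul_one, smul_mul_assoc, one_mul]
    · obtain ⟨c, l'', hs'', hmem'', heq''⟩ := straighten m t ht i
      refine ⟨-c, j :: l'', ?_, ?_, ?_⟩
      · refine List.pairwise_cons.mpr ⟨?_, hs''⟩
        intro x hx
        rcases hmem'' x hx with rfl | hxt
        · exact hij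
        · exact hjt x hxt
      · intro x hx
        rcases List.mem_cons.mp hx with rfl | hx'
        · exact Or.inr (List.mem_cons_self)
        · rcases hmem'' x hx' with rfl | h'
          · exact Or.inl rfl
          · exact Or.inr (List.mem_cons_of_mem _ h')
      · rw [lprod_cons, ← mul_assoc, e_anticomm m (ne_of_gt hij), neg_mul, mul_assoc, heq'',
          lprod_cons, mul_smul_comm, neg_smul]

/-- The finite spanning set of `R_{0,m}`: ordered products of distinct generators. -/
def basisProd (m : ℕ) (s : Finset (Fin m)) : Cl m := lprod m (s.sort (· ≤ ·))

lemma sorted_lprod_mem (l : List (Fin m)) (hl : l.Pairwise (· < ·)) :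
    lprod m l ∈ Submodule.span ℝ (Set.range (basisProd m)) := by
  classical
  have hnd : l.Nodup := hl.nodup
  have : basisProd m l.toFinset = lprod m l := by
    rw [basisProd, (List.toFinset_sort (· ≤ ·) hnd).mpr  (hl.imp le_of_lt)]
  exact this ▸ Submodule.subset_span ⟨l.toFinset, rfl⟩

lemma e_mul_mem (i : Fin m) {x : Cl m}
    (hx : x ∈ Submodule.span ℝ (Set.range (basisProd m))) :
    e m i * x ∈ Submodule.span ℝ (Set.range (basisProd m)) := by
  classical
  induction hx using Submodule.span_induction with
  | mem x hxg =>
      obtain ⟨s, rfl⟩ := hxg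
      have hsort : (s.sort (· ≤ ·)).Pairwise (· < ·) := (Finset.sortedLT_sort s).pairwise
      obtain ⟨c, l', hs', _, heq⟩ := straighten m _ hsort i
      rw [basisProd, heq]
      exact Submodule.smul_mem _ _ (sorted_lprod_mem l' hs')
  | zero => simpa using Submodule.zero_mem _
  | add a b _ _ ha hb => rw [mul_add]; exact Submodule.add_mem _ ha hb
  | smul c a _ ha => rw [mul_smul_comm]; exact Submodule.smul_mem _ _ ha

lemma lprod_mem (l : List (Fin m)) :
    lprod m l ∈ Submodule.span ℝ (Set.range (basisProd m)) := by
  induction l with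
  | nil => exact sorted_lprod_mem [] (by simp)
  | cons i t ih => rw [lprod_cons]; exact e_mul_mem i ih

lemma span_eq_top (m : ℕ) : Submodule.span ℝ (Set.range (basisProd m)) = ⊤ := by
  classical
  rw [eq_top_iff]
  rintro a -
  induction a using CliffordAlgebra.induction with
  | algebraMap r =>
      rw [Algebra.algebraMap_eq_smul_one]
      exact Submodule.smul_mem _ _ (lprod_mem [])
  | ι v =>
      have hv : (CliffordAlgebra.ι (Qf m)) v = ∑ j, v j • e m j := by
        have : v = ∑ j, Pi.single j (v j) := (Finset.univ_sum_single v).symm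
        conv_lhs => rw [this]
        rw [map_sum]
        refine Finset.sum_congr rfl fun j _ => ?_
        rw [e, ← map_smul]
        congr 1
        rw [← Pi.single_smul, smul_eq_mul, mul_one]
      rw [hv]
      refine Submodule.sum_mem _ fun j _ => Submodule.smul_mem _ _ ?_
      simpa [lprod, e] using lprod_mem [j]
  | mul a b ha hb =>
      have := Submodule.mul_mem_mul ha hb
      rw [Submodule.span_mul_span] at this
      refine Submodule.span_le.mpr ?_ this
      rintro x ⟨y, ⟨s, rfl⟩, z, ⟨t, rfl⟩, rfl⟩
      dsimp only
      rw [basisProd, basisProd, ← lprod_append]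
      exact lprod_mem _
  | add a b ha hb => exact Submodule.add_mem _ ha hb

instance (m : ℕ) : Module.Finite ℝ (Cl m) := by
  classical
  exact ⟨⟨Finset.univ.image (basisProd m), by
    rw [Finset.coe_image, Finset.coe_univ, Set.image_univ]
    exact span_eq_top m⟩⟩

instance instNACG (m : ℕ) : NormedAddCommGroup (Cl m) :=
  NormedAddCommGroup.induced (Cl m) (Fin (Module.finrank ℝ (Cl m)) → ℝ)
    ((Module.finBasis ℝ (Cl m)).equivFun.toLinearMap)
    (Module.finBasis ℝ (Cl m)).equivFun.injective

instance instNS (m : ℕ) : NormedSpace ℝ (Cl m) :=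
  NormedSpace.induced ℝ (Cl m) (Fin (Module.finrank ℝ (Cl m)) → ℝ)
    ((Module.finBasis ℝ (Cl m)).equivFun.toLinearMap)

end Cl


/-- An `R_{0,m}`-valued polynomial map on `ℝ^n`. -/
def IsPolynomialMap {n m : ℕ} (f : (Fin n → ℝ) → Cl m) : Prop :=
  ∃ c : (Fin n →₀ ℕ) →₀ Cl m, ∀ x, f x = c.sum fun d a => (∏ i, x i ^ d i) • a

/-- The Dirac operator `∂_x = Σ_j e_j ∂_{x_j}` on `ℝ^m` acting on `R_{0,m}`-valued functions. -/
def dirac (m : ℕ) (f : (Fin m → ℝ) → Cl m) (x : Fin m → ℝ) : Cl m :=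
  ∑ j, e m j * fderiv ℝ f x (Pi.single j 1)

/-- The generalized Cauchy–Riemann operator `∂_x = ∂_{x_0} + Σ_j e_j ∂_{x_j}` on
`ℝ^{m+1} = Fin (m+1) → ℝ`, where the coordinate `0` plays the role of `x_0` and the
coordinate `j.succ` the role of `x_j`. -/
def CauchyRiemann (m : ℕ) (f : (Fin (m + 1) → ℝ) → Cl m) (y : Fin (m + 1) → ℝ) : Cl m :=
  fderiv ℝ f y (Pi.single 0 1) + ∑ j, e m j * fderiv ℝ f y (Pi.single j.succ 1)

/-- The conjugate generalized Cauchy–Riemann operator `∂̄_x = ∂_{x_0} - Σ_j e_j ∂_{x_j}`. -/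
def CauchyRiemannBar (m : ℕ) (f : (Fin (m + 1) → ℝ) → Cl m) (y : Fin (m + 1) → ℝ) : Cl m :=
  fderiv ℝ f y (Pi.single 0 1) - ∑ j, e m j * fderiv ℝ f y (Pi.single j.succ 1)

/-- A function is monogenic in `ℝ^{m+1}` if it is continuously differentiable and is
annihilated by the generalized Cauchy–Riemann operator everywhere. -/
def Monogenic (m : ℕ) (f : (Fin (m + 1) → ℝ) → Cl m) : Prop :=
  ContDiff ℝ 1 f ∧ ∀ y, CauchyRiemann m f y = 0

/-- The Cauchy–Kovalevskaya extension
`CK[g](x_0, x) = Σ_j ((-x_0)^j / j!) (∂_x^j g)(x)` (a finite sum when `g` is polynomial). -/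
def CK (m : ℕ) (g : (Fin m → ℝ) → Cl m) (y : Fin (m + 1) → ℝ) : Cl m :=
  ∑ᶠ j : ℕ, (((-y 0) ^ j / (j.factorial : ℝ)) • (dirac m)^[j] g (Fin.tail y))

/-- The coefficients `β_k(n)`: `n` if `n` is even, `2k + m + n - 1` if `n` is odd. -/
def βc (k m n : ℕ) : ℕ := if Even n then n else 2 * k + m + n - 1

section AuxAnalysis

variable {m : ℕ}

instance (m : ℕ) : FiniteDimensional ℝ (Cl m) := inferInstanceAs (Module.Finite ℝ (Cl m))

/-- Multiplication of `Cl m` as a continuous bilinear map. -/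
def mulL (m : ℕ) : Cl m →L[ℝ] Cl m →L[ℝ] Cl m :=
  LinearMap.toContinuousLinearMap
    (((LinearMap.toContinuousLinearMap :
        (Cl m →ₗ[ℝ] Cl m) ≃ₗ[ℝ] (Cl m →L[ℝ] Cl m)).toLinearMap).comp
      (LinearMap.mul ℝ (Cl m)))

@[simp] lemma mulL_apply (a b : Cl m) : mulL m a b = a * b := by
  simp [mulL]

/-- `clVec` as a continuous linear map. -/
def clVecL (m : ℕ) : (Fin m → ℝ) →L[ℝ] Cl m :=
  LinearMap.toContinuousLinearMap (CliffordAlgebra.ι (Qf m))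

@[simp] lemma clVecL_apply (x : Fin m → ℝ) : clVecL m x = clVec m x := rfl

lemma clVec_hasFDerivAt (x : Fin m → ℝ) : HasFDerivAt (clVec m) (clVecL m) x :=
  (clVecL m).hasFDerivAt

/-- `Fin.tail` as a continuous linear map. -/
def tailL (m : ℕ) : (Fin (m + 1) → ℝ) →L[ℝ] (Fin m → ℝ) :=
  LinearMap.toContinuousLinearMap (LinearMap.funLeft ℝ ℝ Fin.succ)

@[simp] lemma tailL_apply (y : Fin (m + 1) → ℝ) : tailL m y = Fin.tail y := rfl

lemma hasFDerivAt_clmul {E : Type*} [NormedAddCommGroup E] [NormedSpace ℝ E]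
    {f g : E → Cl m} {f' g' : E →L[ℝ] Cl m} {x : E}
    (hf : HasFDerivAt f f' x) (hg : HasFDerivAt g g' x) :
    HasFDerivAt (fun y => f y * g y)
      ((mulL m (f x)).comp g' + ((mulL m).comp f').flip (g x)) x := by
  have hc : HasFDerivAt (fun y => mulL m (f y)) ((mulL m).comp f') x :=
    (mulL m).hasFDerivAt.comp x hf
  have := hc.clm_apply hg
  simpa using this

lemma DifferentiableCl.mul {E : Type*} [NormedAddCommGroup E] [NormedSpace ℝ E]
    {f g : E → Cl m} (hf : Differentiable ℝ f) (hg : Differentiable ℝ g) :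
    Differentiable ℝ (fun y => f y * g y) := fun x =>
  (hasFDerivAt_clmul (hf x).hasFDerivAt (hg x).hasFDerivAt).differentiableAt

lemma differentiable_clVec_pow (s : ℕ) :
    Differentiable ℝ (fun x : Fin m → ℝ => clVec m x ^ s) := by
  induction s with
  | zero => simpa using differentiable_const (1 : Cl m)
  | succ t ih =>
      have : Differentiable ℝ (fun x : Fin m → ℝ => clVec m x ^ t * clVec m x) :=
        DifferentiableCl.mul ih (clVecL m).differentiable
      simpa [pow_succ] using this

lemma IsPolynomialMap.differentiable {f : (Fin m → ℝ) → Cl m} (h : IsPolynomialMap f) :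
    Differentiable ℝ f := by
  obtain ⟨c, hc⟩ := h
  have : f = fun x => c.sum fun d a => (∏ i, x i ^ d i) • a := funext hc
  rw [this]
  apply Differentiable.fun_sum
  intro d _
  apply Differentiable.smul_const
  have key : ∀ s : Finset (Fin m), Differentiable ℝ (fun x : Fin m → ℝ => ∏ i ∈ s, x i ^ d i) := by
    intro s
    induction s using Finset.induction with
    | empty => simpa using differentiable_const (1 : ℝ)
    | insert a s hnot ih =>
        have ha : Differentiable ℝ (fun x : Fin m → ℝ => x a ^ d a) :=
          ((ContinuousLinearMap.proj (R := ℝ) (φ := fun _ : Fin m => ℝ) a).differentiable).pow _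
        simpa [Finset.prod_insert hnot] using ha.fun_mul ih
  exact key Finset.univ

end AuxAnalysis
section AuxClifford

variable {m : ℕ}

lemma polar_vec (j : Fin m) (x : Fin m → ℝ) :
    QuadraticMap.polar (Qf m) (Pi.single j 1) x = -(2 * x j) := by
  classical
  simp only [QuadraticMap.polar, Qf, QuadraticMap.weightedSumSquares_apply, smul_eq_mul]
  rw [← Finset.sum_sub_distrib, ← Finset.sum_sub_distrib]
  rw [Finset.sum_eq_single j]
  · simp only [Pi.add_apply, Pi.single_eq_same]; ring
  · intro i _ hij
    simp only [Pi.add_apply, Pi.single_eq_of_ne hij]; ring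
  · simp

lemma e_mul_clVec (j : Fin m) (x : Fin m → ℝ) :
    e m j * clVec m x = (-(2 * x j)) • (1 : Cl m) - clVec m x * e m j := by
  have h := CliffordAlgebra.ι_mul_ι_add_swap (Q := Qf m) (Pi.single j 1) x
  rw [polar_vec] at h
  have : e m j * clVec m x + clVec m x * e m j = algebraMap ℝ (Cl m) (-(2 * x j)) := h
  rw [Algebra.algebraMap_eq_smul_one] at this
  linear_combination (norm := module) this

/-- The Euler identity for homogeneous differentiable functions. -/
lemma euler_identity {f : (Fin m → ℝ) → Cl m} (hf : Differentiable ℝ f) (d : ℕ)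
    (hhom : ∀ (t : ℝ) (x : Fin m → ℝ), f (t • x) = t ^ d • f x) (x : Fin m → ℝ) :
    fderiv ℝ f x x = (d : ℝ) • f x := by
  have h1 : HasDerivAt (fun t : ℝ => f (t • x)) (fderiv ℝ f x x) 1 := by
    have hs : HasDerivAt (fun t : ℝ => t • x) x 1 := by
      simpa using (hasDerivAt_id (1 : ℝ)).smul_const x
    have := (hf (1 • x)).hasFDerivAt.comp_hasDerivAt 1 hs
    simp only [one_smul] at this
    exact this
  have h2 : HasDerivAt (fun t : ℝ => t ^ d • f x) ((d : ℝ) • f x) 1 := by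
    simpa using (hasDerivAt_pow d (1 : ℝ)).smul_const (f x)
  have heq : (fun t : ℝ => f (t • x)) = fun t : ℝ => t ^ d • f x := funext fun t => hhom t x
  rw [heq] at h1
  exact h1.unique h2

lemma fderiv_self_eq_sum (f : (Fin m → ℝ) → Cl m) (x : Fin m → ℝ) :
    fderiv ℝ f x x = ∑ j, x j • fderiv ℝ f x (Pi.single j 1) := by
  have hx : ∑ j, x j • (Pi.single j (1 : ℝ) : Fin m → ℝ) = x := by
    have h1 : ∀ j : Fin m, x j • (Pi.single j (1 : ℝ) : Fin m → ℝ) = Pi.single j (x j) :=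
      fun j => by rw [← Pi.single_smul, smul_eq_mul, mul_one]
    simp_rw [h1]
    exact Finset.univ_sum_single x
  calc fderiv ℝ f x x
      = fderiv ℝ f x (∑ j, x j • (Pi.single j (1 : ℝ) : Fin m → ℝ)) := by rw [hx]
    _ = ∑ j, x j • fderiv ℝ f x (Pi.single j 1) := by
        rw [map_sum]
        exact Finset.sum_congr rfl fun j _ => (fderiv ℝ f x).map_smul _ _

/-- `∂(x f) = -m f - 2 E f - x ∂ f`. -/
lemma dirac_clVec_mul {f : (Fin m → ℝ) → Cl m} (hf : Differentiable ℝ f) (x : Fin m → ℝ) :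
    dirac m (fun y => clVec m y * f y) x
      = -((m : ℝ) • f x) - (2 : ℝ) • fderiv ℝ f x x - clVec m x * dirac m f x := by
  have hfd : ∀ j : Fin m,
      fderiv ℝ (fun y => clVec m y * f y) x (Pi.single j 1)
        = e m j * f x + clVec m x * fderiv ℝ f x (Pi.single j 1) := by
    intro j
    have H := hasFDerivAt_clmul (clVec_hasFDerivAt x) (hf x).hasFDerivAt
    rw [H.fderiv]
    simp [e, clVec, add_comm]
  unfold dirac
  rw [Finset.sum_congr rfl (fun j _ => by rw [hfd j])]
  have expand : ∀ j : Fin m,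
      e m j * (e m j * f x + clVec m x * fderiv ℝ f x (Pi.single j 1))
        = -f x + ((-(2 * x j)) • fderiv ℝ f x (Pi.single j 1)
            - clVec m x * (e m j * fderiv ℝ f x (Pi.single j 1))) := by
    intro j
    rw [mul_add, ← mul_assoc, ← mul_assoc, Cl.e_sq, e_mul_clVec]
    rw [Algebra.algebraMap_eq_smul_one]
    set w := fderiv ℝ f x (Pi.single j 1)
    rw [sub_mul, smul_mul_assoc, smul_mul_assoc, one_mul, one_mul, mul_assoc]
    module
  rw [Finset.sum_congr rfl (fun j _ => expand j)]
  rw [Finset.sum_add_distrib, Finset.sum_sub_distrib, Finset.sum_const, Finset.card_univ,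
    Fintype.card_fin]
  have hE : ∑ j : Fin m, (-(2 * x j)) • fderiv ℝ f x (Pi.single j 1)
      = -((2 : ℝ) • fderiv ℝ f x x) := by
    rw [fderiv_self_eq_sum f x, Finset.smul_sum, ← Finset.sum_neg_distrib]
    refine Finset.sum_congr rfl fun j _ => ?_
    rw [smul_smul, ← neg_smul]
  rw [hE]
  have hD : ∑ j : Fin m, clVec m x * (e m j * fderiv ℝ f x (Pi.single j 1))
      = clVec m x * dirac m f x := by
    rw [dirac, Finset.mul_sum]
  rw [hD]
  have hm : (m : ℕ) • (-f x) = -((m : ℝ) • f x) := by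
    rw [smul_neg, Nat.cast_smul_eq_nsmul]
  rw [hm]
  abel

end AuxClifford
section AuxG

variable {m : ℕ}

/-- `G_s(x) = x^s P(x)`. -/
def Gf (m : ℕ) (P : (Fin m → ℝ) → Cl m) (s : ℕ) : (Fin m → ℝ) → Cl m :=
  fun x => clVec m x ^ s * P x

lemma Gf_succ (P : (Fin m → ℝ) → Cl m) (s : ℕ) :
    Gf m P (s + 1) = fun x => clVec m x * Gf m P s x := by
  funext x
  rw [Gf, Gf, pow_succ', mul_assoc]

lemma Gf_diff {P : (Fin m → ℝ) → Cl m} (hP : Differentiable ℝ P) (s : ℕ) :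
    Differentiable ℝ (Gf m P s) :=
  DifferentiableCl.mul (differentiable_clVec_pow s) hP

lemma Gf_hom {l : ℕ} {P : (Fin m → ℝ) → Cl m}
    (hhom : ∀ (t : ℝ) (x : Fin m → ℝ), P (t • x) = t ^ l • P x) (s : ℕ)
    (t : ℝ) (x : Fin m → ℝ) : Gf m P s (t • x) = t ^ (s + l) • Gf m P s x := by
  unfold Gf
  rw [show clVec m (t • x) = t • clVec m x from map_smul (CliffordAlgebra.ι (Qf m)) t x,
    smul_pow, hhom, smul_mul_assoc, mul_smul_comm, smul_smul, ← pow_add]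

lemma beta_add (l m s : ℕ) : βc l m s + βc l m (s + 1) = 2 * l + m + 2 * s := by
  rcases Nat.even_or_odd s with he | ho
  · rw [βc, if_pos he, βc, if_neg (by simp [Nat.even_add_one, he])]
    omega
  · obtain ⟨c, rfl⟩ := ho
    rw [βc, if_neg (by simp [Nat.even_add_one, parity_simps]), βc,
      if_pos (by simp [Nat.even_add_one, parity_simps])]
    omega

lemma beta_zero (l m : ℕ) : βc l m 0 = 0 := by simp [βc]

lemma dirac_Gf {l : ℕ} {P : (Fin m → ℝ) → Cl m} (hP : Differentiable ℝ P)
    (hhom : ∀ (t : ℝ) (x : Fin m → ℝ), P (t • x) = t ^ l • P x)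
    (hmono : ∀ x, dirac m P x = 0) :
    ∀ (s : ℕ) (x : Fin m → ℝ),
      dirac m (Gf m P s) x = (-(βc l m s : ℝ)) • Gf m P (s - 1) x := by
  intro s
  induction s with
  | zero =>
      intro x
      have hG0 : Gf m P 0 = P := by funext z; simp [Gf]
      rw [hG0, hmono x, beta_zero]
      simp
  | succ t ih =>
      intro x
      rw [Gf_succ, dirac_clVec_mul (Gf_diff hP t) x]
      rw [euler_identity (Gf_diff hP t) (t + l) (Gf_hom hhom t) x, ih x]
      have hco : (βc l m (t + 1) : ℝ) = (m : ℝ) + 2 * ((t : ℝ) + l) - (βc l m t : ℝ) := by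
        have := beta_add l m t
        have h2 : ((βc l m t + βc l m (t + 1) : ℕ) : ℝ) = ((2 * l + m + 2 * t : ℕ) : ℝ) := by
          rw [this]
        push_cast at h2
        linarith
      rcases Nat.eq_zero_or_pos t with rfl | htpos
      · simp only [beta_zero, Nat.cast_zero, neg_zero, zero_smul, mul_zero, sub_zero,
          Nat.add_sub_cancel]
        rw [hco, beta_zero]
        push_cast
        match_scalars <;> ring
      · have hsub : t - 1 + 1 = t := Nat.succ_pred_eq_of_pos htpos
        have hGt : clVec m x * Gf m P (t - 1) x = Gf m P t x := by
          conv_rhs => rw [← hsub, Gf_succ]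
        rw [mul_smul_comm, hGt, hco]
        have hts : t + 1 - 1 = t := rfl
        rw [hts]
        push_cast
        match_scalars <;> ring

/-- The coefficients of the iterated Dirac operator applied to `G_M`. -/
def Cc (l m M : ℕ) : ℕ → ℝ
  | 0 => 1
  | j + 1 => (-(βc l m (M - j) : ℝ)) * Cc l m M j

lemma dirac_const_smul {P : (Fin m → ℝ) → Cl m} (hP : Differentiable ℝ P)
    (c : ℝ) (t : ℕ) (x : Fin m → ℝ) :
    dirac m (fun y => c • Gf m P t y) x = c • dirac m (Gf m P t) x := by
  unfold dirac
  rw [Finset.smul_sum]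
  refine Finset.sum_congr rfl fun j _ => ?_
  rw [fderiv_fun_const_smul (Gf_diff hP t x) c]
  simp [mul_smul_comm]

lemma iterate_dirac {l : ℕ} {P : (Fin m → ℝ) → Cl m} (hP : Differentiable ℝ P)
    (hhom : ∀ (t : ℝ) (x : Fin m → ℝ), P (t • x) = t ^ l • P x)
    (hmono : ∀ x, dirac m P x = 0) (M : ℕ) :
    ∀ j : ℕ, (dirac m)^[j] (Gf m P M) = fun x => Cc l m M j • Gf m P (M - j) x := by
  intro j
  induction j with
  | zero => funext x; simp [Cc]
  | succ j ih =>
      rw [Function.iterate_succ_apply', ih]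
      funext x
      rw [dirac_const_smul hP, dirac_Gf hP hhom hmono (M - j) x, smul_smul,
        Nat.sub_sub, Cc, mul_comm]

lemma Cc_eq_zero (l m M : ℕ) : ∀ j, M < j → Cc l m M j = 0 := by
  intro j
  induction j with
  | zero => omega
  | succ j ih =>
      intro hj
      rcases Nat.lt_or_ge M (j + 1) with h | h
      · rcases Nat.lt_or_ge M j with h' | h'
        · rw [Cc, ih h', mul_zero]
        · have : M = j := by omega
          subst this
          rw [Cc, Nat.sub_self, beta_zero]
          simp
      · omega

lemma CK_Gf {l : ℕ} {P : (Fin m → ℝ) → Cl m} (hP : Differentiable ℝ P)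
    (hhom : ∀ (t : ℝ) (x : Fin m → ℝ), P (t • x) = t ^ l • P x)
    (hmono : ∀ x, dirac m P x = 0) (M : ℕ) (y : Fin (m + 1) → ℝ) :
    CK m (Gf m P M) y = ∑ j ∈ Finset.range (M + 1),
      ((-y 0) ^ j / (j.factorial : ℝ)) • (Cc l m M j • Gf m P (M - j) (Fin.tail y)) := by
  unfold CK
  have hb : ∀ j : ℕ, (dirac m)^[j] (Gf m P M) (Fin.tail y)
      = Cc l m M j • Gf m P (M - j) (Fin.tail y) :=
    fun j => congrFun (iterate_dirac hP hhom hmono M j) _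
  simp_rw [hb]
  apply finsum_eq_sum_of_support_subset
  intro j hj
  simp only [Finset.coe_range, Set.mem_Iio]
  by_contra hlt
  apply hj
  show ((-y 0) ^ j / (j.factorial : ℝ)) • (Cc l m M j • Gf m P (M - j) (Fin.tail y)) = 0
  rw [Cc_eq_zero l m M j (by omega)]
  simp

end AuxG
section AuxFinal

variable {m : ℕ}

lemma tail_single_zero :
    Fin.tail (α := fun _ : Fin (m + 1) => ℝ) (Pi.single (0 : Fin (m + 1)) (1 : ℝ)) = 0 := by
  funext i
  show (Pi.single (0 : Fin (m + 1)) (1 : ℝ)) i.succ = 0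
  exact Pi.single_eq_of_ne (Fin.succ_ne_zero i) 1

lemma tail_single_succ (k : Fin m) :
    Fin.tail (α := fun _ : Fin (m + 1) => ℝ) (Pi.single (Fin.succ k) (1 : ℝ)) = Pi.single k 1 := by
  funext i
  show Pi.single (M := fun _ : Fin (m + 1) => ℝ) (Fin.succ k) 1 i.succ
    = Pi.single (M := fun _ : Fin m => ℝ) k 1 i
  rcases eq_or_ne i k with rfl | hik
  · rw [Pi.single_eq_same, Pi.single_eq_same]
  · rw [Pi.single_eq_of_ne (fun h => hik (Fin.succ_injective _ h)) 1,
      Pi.single_eq_of_ne hik]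

lemma Cc_key (l m N : ℕ) : ∀ i, i < N →
    (βc l m N : ℝ) * Cc l m (N - 1) i = (βc l m (N - i) : ℝ) * Cc l m N i := by
  intro i
  induction i with
  | zero => intro _; simp [Cc]
  | succ i ih =>
      intro hi
      have h1 : N - 1 - i = N - (i + 1) := by omega
      show (βc l m N : ℝ) * ((-(βc l m (N - 1 - i) : ℝ)) * Cc l m (N - 1) i)
        = (βc l m (N - (i + 1)) : ℝ) * ((-(βc l m (N - i) : ℝ)) * Cc l m N i)
      rw [h1]
      linear_combination (-(βc l m (N - (i + 1)) : ℝ)) * ih (by omega)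

lemma final_scalar (l m N i : ℕ) (u : ℝ) (hi : i < N) :
    (1 / 2 : ℝ) * (((((i : ℝ) + 1) * u ^ i * -1) / (((i + 1).factorial : ℝ))) * Cc l m N (i + 1))
      - (1 / 2 : ℝ) * ((u ^ i / (i.factorial : ℝ)) * (Cc l m N i * (-(βc l m (N - i) : ℝ))))
    = (βc l m N : ℝ) * ((u ^ i / (i.factorial : ℝ)) * Cc l m (N - 1) i) := by
  have hkey := Cc_key l m N i hi
  have hc1 : Cc l m N (i + 1) = -(βc l m (N - i) : ℝ) * Cc l m N i := rfl
  have hfac : (((i + 1).factorial : ℝ)) = ((i : ℝ) + 1) * (i.factorial : ℝ) := by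
    rw [Nat.factorial_succ]; push_cast; ring
  have hne : (i.factorial : ℝ) ≠ 0 := Nat.cast_ne_zero.mpr (Nat.factorial_ne_zero i)
  have hne1 : ((i : ℝ) + 1) ≠ 0 := by positivity
  rw [hc1, hfac]
  have h1 : (((i : ℝ) + 1) * u ^ i * -1) / (((i : ℝ) + 1) * (i.factorial : ℝ))
      = -(u ^ i / (i.factorial : ℝ)) := by field_simp
  rw [h1]
  linear_combination (-(u ^ i / (i.factorial : ℝ))) * hkey

theorem main_aux (m l N : ℕ) (hN : 1 ≤ N) (P : (Fin m → ℝ) → Cl m)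
    (hP : Differentiable ℝ P)
    (hhom : ∀ (t : ℝ) (x : Fin m → ℝ), P (t • x) = t ^ l • P x)
    (hmono : ∀ x, dirac m P x = 0) (y : Fin (m + 1) → ℝ) :
    (1 / 2 : ℝ) • CauchyRiemannBar m (CK m (Gf m P N)) y
      = (βc l m N : ℝ) • CK m (Gf m P (N - 1)) y := by
  classical
  have hCK1 : CK m (Gf m P N) = fun y' => ∑ j ∈ Finset.range (N + 1),
      ((-y' 0) ^ j / (j.factorial : ℝ)) • (Cc l m N j • Gf m P (N - j) (Fin.tail y')) :=
    funext fun y' => CK_Gf hP hhom hmono N y'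
  rw [hCK1, CK_Gf hP hhom hmono (N - 1) y]
  -- derivative of each summand
  have hproj : HasFDerivAt (fun y' : Fin (m + 1) → ℝ => y' 0)
      (ContinuousLinearMap.proj (R := ℝ) (φ := fun _ : Fin (m + 1) => ℝ) 0) y := by
    have h := (ContinuousLinearMap.proj (R := ℝ) (φ := fun _ : Fin (m + 1) => ℝ)
      0).hasFDerivAt (x := y)
    exact h
  have hφ : ∀ j : ℕ, HasFDerivAt (fun y' : Fin (m + 1) → ℝ => (-y' 0) ^ j / (j.factorial : ℝ))
      (((((j : ℝ)) * (-y 0) ^ (j - 1) * -1) / (j.factorial : ℝ)) •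
        ContinuousLinearMap.proj (R := ℝ) (φ := fun _ : Fin (m + 1) => ℝ) 0) y := by
    intro j
    have hneg : HasDerivAt (fun s : ℝ => -s) (-1) (y 0) := (hasDerivAt_id (y 0)).neg
    have hpow : HasDerivAt (fun s : ℝ => (-s) ^ j) ((j : ℝ) * (-(y 0)) ^ (j - 1) * -1) (y 0) :=
      (hasDerivAt_pow j (-(y 0))).comp (y 0) hneg
    have hdiv := hpow.div_const (j.factorial : ℝ)
    exact hdiv.comp_hasFDerivAt y hproj
  have hψ : ∀ j : ℕ, HasFDerivAt
      (fun y' : Fin (m + 1) → ℝ => Cc l m N j • Gf m P (N - j) (Fin.tail y'))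
      (Cc l m N j • ((fderiv ℝ (Gf m P (N - j)) (Fin.tail y)).comp (tailL m))) y := by
    intro j
    have h1 : HasFDerivAt (fun y' : Fin (m + 1) → ℝ => Gf m P (N - j) (Fin.tail y'))
        ((fderiv ℝ (Gf m P (N - j)) (Fin.tail y)).comp (tailL m)) y :=
      (Gf_diff hP (N - j) (Fin.tail y)).hasFDerivAt.comp y (tailL m).hasFDerivAt
    exact h1.const_smul (Cc l m N j)
  set D : ℕ → ((Fin (m + 1) → ℝ) →L[ℝ] Cl m) := fun j =>
    ((-y 0) ^ j / (j.factorial : ℝ)) •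
        (Cc l m N j • ((fderiv ℝ (Gf m P (N - j)) (Fin.tail y)).comp (tailL m)))
      + (((((j : ℝ)) * (-y 0) ^ (j - 1) * -1) / (j.factorial : ℝ)) •
          ContinuousLinearMap.proj (R := ℝ) (φ := fun _ : Fin (m + 1) => ℝ) 0).smulRight
        (Cc l m N j • Gf m P (N - j) (Fin.tail y)) with hD
  have hS : HasFDerivAt (fun y' => ∑ j ∈ Finset.range (N + 1),
      ((-y' 0) ^ j / (j.factorial : ℝ)) • (Cc l m N j • Gf m P (N - j) (Fin.tail y')))
      (∑ j ∈ Finset.range (N + 1), D j) y :=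
    HasFDerivAt.fun_sum fun j _ => (hφ j).smul (hψ j)
  rw [CauchyRiemannBar, hS.fderiv]
  -- evaluate in the x₀ direction
  have hap0 : (∑ j ∈ Finset.range (N + 1), D j) (Pi.single 0 1)
      = ∑ j ∈ Finset.range (N + 1), ((((j : ℝ)) * (-y 0) ^ (j - 1) * -1) / (j.factorial : ℝ)) •
          (Cc l m N j • Gf m P (N - j) (Fin.tail y)) := by
    rw [ContinuousLinearMap.sum_apply]
    refine Finset.sum_congr rfl fun j _ => ?_
    rw [hD]
    simp only [ContinuousLinearMap.add_apply, ContinuousLinearMap.coe_smul', Pi.smul_apply,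
      ContinuousLinearMap.coe_comp', Function.comp_apply, tailL_apply,
      ContinuousLinearMap.smulRight_apply, ContinuousLinearMap.proj_apply]
    rw [tail_single_zero]
    simp [Pi.single_eq_same, smul_smul]
  -- evaluate in the xₖ directions
  have hapk : ∀ kk : Fin m, (∑ j ∈ Finset.range (N + 1), D j) (Pi.single kk.succ 1)
      = ∑ j ∈ Finset.range (N + 1), ((-y 0) ^ j / (j.factorial : ℝ)) •
          (Cc l m N j • fderiv ℝ (Gf m P (N - j)) (Fin.tail y) (Pi.single kk 1)) := by
    intro kk
    rw [ContinuousLinearMap.sum_apply]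
    refine Finset.sum_congr rfl fun j _ => ?_
    rw [hD]
    simp only [ContinuousLinearMap.add_apply, ContinuousLinearMap.coe_smul', Pi.smul_apply,
      ContinuousLinearMap.coe_comp', Function.comp_apply, tailL_apply,
      ContinuousLinearMap.smulRight_apply, ContinuousLinearMap.proj_apply]
    rw [tail_single_succ, Pi.single_eq_of_ne (Fin.succ_ne_zero kk).symm]
    simp [smul_smul]
  have hsum2 : ∑ kk : Fin m, e m kk *
        ((∑ j ∈ Finset.range (N + 1), D j) (Pi.single kk.succ 1))
      = ∑ j ∈ Finset.range (N + 1), ((-y 0) ^ j / (j.factorial : ℝ)) •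
          (Cc l m N j • ((-(βc l m (N - j) : ℝ)) • Gf m P (N - j - 1) (Fin.tail y))) := by
    simp_rw [hapk, Finset.mul_sum]
    rw [Finset.sum_comm]
    refine Finset.sum_congr rfl fun j _ => ?_
    simp_rw [mul_smul_comm]
    rw [← Finset.smul_sum, ← Finset.smul_sum]
    have hd : ∑ kk : Fin m, e m kk * fderiv ℝ (Gf m P (N - j)) (Fin.tail y) (Pi.single kk 1)
        = dirac m (Gf m P (N - j)) (Fin.tail y) := rfl
    rw [hd, dirac_Gf hP hhom hmono (N - j) (Fin.tail y)]
  rw [hap0, hsum2]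
  have hNN : N - 1 + 1 = N := by omega
  rw [hNN]
  have hA : ∑ j ∈ Finset.range (N + 1), ((((j : ℝ)) * (-y 0) ^ (j - 1) * -1) / (j.factorial : ℝ)) •
        (Cc l m N j • Gf m P (N - j) (Fin.tail y))
      = ∑ i ∈ Finset.range N, ((((i : ℝ) + 1) * (-y 0) ^ i * -1) / (((i + 1).factorial : ℝ))) •
        (Cc l m N (i + 1) • Gf m P (N - (i + 1)) (Fin.tail y)) := by
    rw [Finset.sum_range_succ']
    have h0 : (((((0 : ℕ) : ℝ)) * (-y 0) ^ (0 - 1) * -1) / (((0 : ℕ).factorial : ℝ))) •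
        (Cc l m N 0 • Gf m P (N - 0) (Fin.tail y)) = 0 := by
      norm_num
    rw [h0, add_zero]
    refine Finset.sum_congr rfl fun i _ => ?_
    congr 1
    simp only [Nat.add_sub_cancel]
    push_cast
    ring
  have hB : ∑ j ∈ Finset.range (N + 1), ((-y 0) ^ j / (j.factorial : ℝ)) •
        (Cc l m N j • ((-(βc l m (N - j) : ℝ)) • Gf m P (N - j - 1) (Fin.tail y)))
      = ∑ i ∈ Finset.range N, ((-y 0) ^ i / (i.factorial : ℝ)) •
        (Cc l m N i • ((-(βc l m (N - i) : ℝ)) • Gf m P (N - i - 1) (Fin.tail y))) := by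
    rw [Finset.sum_range_succ]
    have hNz : (βc l m (N - N) : ℝ) = 0 := by rw [Nat.sub_self, beta_zero]; norm_num
    rw [hNz]
    norm_num
  rw [hA, hB, ← Finset.sum_sub_distrib, Finset.smul_sum, Finset.smul_sum]
  refine Finset.sum_congr rfl fun i hi => ?_
  have hiN : i < N := Finset.mem_range.mp hi
  have e1 : N - i - 1 = N - (i + 1) := by omega
  have e2 : N - 1 - i = N - (i + 1) := by omega
  rw [e1, e2]
  have hfs := final_scalar l m N i (-y 0) hiN
  match_scalars
  linear_combination hfs

end AuxFinal
/-- `(1/2) ∂̄_x CK[x^{ν+n} P_{k-ν}] = β_{k-ν}(ν+n) CK[x^{ν+n-1} P_{k-ν}]`. -/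
theorem half_crbar_ck_vec_pow (m k ν : ℕ) (hν : ν ≤ k) (n : ℕ) (hn : 1 ≤ n)
    (P : (Fin m → ℝ) → Cl m)
    (hpoly : IsPolynomialMap P)
    (hhom : ∀ (t : ℝ) (x : Fin m → ℝ), P (t • x) = t ^ (k - ν) • P x)
    (hmono : ∀ x, dirac m P x = 0)
    (y : Fin (m + 1) → ℝ) :
    (1 / 2 : ℝ) • CauchyRiemannBar m (CK m (fun x => clVec m x ^ (ν + n) * P x)) y
      = (βc (k - ν) m (ν + n) : ℝ) •
          CK m (fun x => clVec m x ^ (ν + n - 1) * P x) y := by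
  exact main_aux m (k - ν) (ν + n) (by omega) P hpoly.differentiable hhom hmono y
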